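/- arXiv:1902.03396 — 7 statements merged into one kernel-verified Lean document; each statement's English description precedes it below -/
import Mathlib

section
/- Let A and B be R-algebras. If every commuting map on A is proper and every commuting map on B is proper, then every commuting map on the direct product algebra A × B is proper. -/
/-- A commuting map on an `R`-algebra `C`. -/
def IsCommutingMap {R C : Type*} [CommRing R] [Ring C] [Algebra R C] (θ : C →ₗ[R] C) : Prop :=
  ∀ x : C, θ x * x = x * θ x

/-- `θ` is proper: `θ(x) = λ*x + μ(x)` with `λ` central and `μ` `R`-linear central-valued. -/
def ProperCommMap {R C : Type*} [CommRing R] [Ring C] [Algebra R C] (θ : C →ₗ[R] C) : Prop :=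
  ∃ l ∈ Set.center C, ∃ μ : C →ₗ[R] C, (∀ x, μ x ∈ Set.center C) ∧ ∀ x, θ x = l * x + μ x

/-- if every commuting map on `A` and on `B` is proper, then every commuting
map on `A × B` is proper. -/
theorem prod_commuting_proper {R A B : Type*} [CommRing R] [Ring A] [Ring B]
    [Algebra R A] [Algebra R B]
    (hA : ∀ θ : A →ₗ[R] A, IsCommutingMap θ → ProperCommMap θ)
    (hB : ∀ θ : B →ₗ[R] B, IsCommutingMap θ → ProperCommMap θ) :
    ∀ θ : A × B →ₗ[R] A × B, IsCommutingMap θ → ProperCommMap θ := by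
  intro θ hθ
  classical
  set θA : A →ₗ[R] A := (LinearMap.fst R A B) ∘ₗ θ ∘ₗ LinearMap.inl R A B with hθAdef
  set θB : B →ₗ[R] B := (LinearMap.snd R A B) ∘ₗ θ ∘ₗ LinearMap.inr R A B with hθBdef
  have hθA : IsCommutingMap θA := by
    intro a
    have h := congrArg Prod.fst (hθ (a, 0))
    simpa [hθAdef] using h
  have hθB : IsCommutingMap θB := by
    intro b
    have h := congrArg Prod.snd (hθ (0, b))
    simpa [hθBdef] using h
  obtain ⟨lA, hlA, μA, hμA, hfA⟩ := hA θA hθA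
  obtain ⟨lB, hlB, μB, hμB, hfB⟩ := hB θB hθB
  have hsplit : ∀ a b, θ (a, b) = θ (a, 0) + θ (0, b) := by
    intro a b; rw [← map_add]; simp
  have hcrossA : ∀ b : B, (θ (0, b)).1 ∈ Set.center A := by
    intro b
    rw [Semigroup.mem_center_iff]
    intro a
    have h1 := congrArg Prod.fst (hθ (a, b))
    rw [hsplit a b] at h1
    have hA1 : (θ (a, 0)).1 * a = a * (θ (a, 0)).1 := by
      have := hθA a; simpa [hθAdef] using this
    simp only [Prod.fst_mul, Prod.fst_add, add_mul, mul_add] at h1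
    rw [hA1] at h1
    exact (add_left_cancel h1).symm
  have hcrossB : ∀ a : A, (θ (a, 0)).2 ∈ Set.center B := by
    intro a
    rw [Semigroup.mem_center_iff]
    intro b
    have h1 := congrArg Prod.snd (hθ (a, b))
    rw [hsplit a b] at h1
    have hB1 : (θ (0, b)).2 * b = b * (θ (0, b)).2 := by
      have := hθB b; simpa [hθBdef] using this
    simp only [Prod.snd_mul, Prod.snd_add, add_mul, mul_add] at h1
    rw [hB1] at h1
    exact (add_right_cancel h1).symm
  refine ⟨(lA, lB), ?_, θ - LinearMap.mulLeft R ((lA, lB) : A × B), ?_, ?_⟩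
  · rw [Semigroup.mem_center_iff]
    rintro ⟨a, b⟩
    ext
    · exact Semigroup.mem_center_iff.mp hlA a
    · exact Semigroup.mem_center_iff.mp hlB b
  · rintro ⟨a, b⟩
    rw [Semigroup.mem_center_iff]
    rintro ⟨c, d⟩
    have hfa : (θ (a, 0)).1 = lA * a + μA a := by
      have := hfA a; simpa [hθAdef] using this
    have hfb : (θ (0, b)).2 = lB * b + μB b := by
      have := hfB b; simpa [hθBdef] using this
    have hx1 : (θ (a, b)).1 - lA * a = μA a + (θ (0, b)).1 := by
      rw [hsplit a b]; simp [hfa]; abel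
    have hx2 : (θ (a, b)).2 - lB * b = (θ (a, 0)).2 + μB b := by
      rw [hsplit a b]; simp [hfb]; abel
    ext
    · simp only [LinearMap.sub_apply, LinearMap.mulLeft_apply, Prod.fst_mul, Prod.fst_sub,
        Prod.mk_mul_mk]
      rw [hx1, add_mul, mul_add,
        Semigroup.mem_center_iff.mp (hμA a) c,
        Semigroup.mem_center_iff.mp (hcrossA b) c]
    · simp only [LinearMap.sub_apply, LinearMap.mulLeft_apply, Prod.snd_mul, Prod.snd_sub,
        Prod.mk_mul_mk]
      rw [hx2, add_mul, mul_add,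
        Semigroup.mem_center_iff.mp (hμB b) d,
        Semigroup.mem_center_iff.mp (hcrossB a) d]
  · intro x
    simp [LinearMap.sub_apply]
end

section
/- Let A and B be R-algebras with unity. If the direct product algebra A × B admits no improper commuting map, then A admits no improper commuting map. -/
/-- if `A × B` admits no improper commuting map, then neither does `A`. -/
theorem factor_commuting_proper {R A B : Type*} [CommRing R] [Ring A] [Ring B]
    [Algebra R A] [Algebra R B]
    (hAB : ∀ θ : A × B →ₗ[R] A × B, IsCommutingMap θ → ProperCommMap θ) :
    ∀ θ : A →ₗ[R] A, IsCommutingMap θ → ProperCommMap θ := by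
  intro θ hθ
  set Θ : A × B →ₗ[R] A × B := (LinearMap.inl R A B).comp (θ.comp (LinearMap.fst R A B)) with hΘ
  have hΘc : IsCommutingMap Θ := by
    intro x
    have := hθ x.1
    simp only [hΘ, LinearMap.comp_apply, LinearMap.inl_apply, LinearMap.fst_apply,
      Prod.mul_def, zero_mul, mul_zero]
    exact Prod.ext this rfl
  obtain ⟨l, hl, μ, hμc, hμ⟩ := hAB Θ hΘc
  refine ⟨l.1, ?_, (LinearMap.fst R A B).comp (μ.comp (LinearMap.inl R A B)), ?_, ?_⟩
  · rw [Semigroup.mem_center_iff] at hl ⊢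
    intro g
    have := hl (g, 0)
    exact congrArg Prod.fst this
  · intro x
    simp only [LinearMap.comp_apply, LinearMap.fst_apply, LinearMap.inl_apply]
    rw [Semigroup.mem_center_iff]
    have hc := hμc (x, 0)
    rw [Semigroup.mem_center_iff] at hc
    intro g
    exact congrArg Prod.fst (hc (g, 0))
  · intro x
    have := hμ (x, 0)
    have h1 := congrArg Prod.fst this
    simpa [hΘ] using h1
end

section
/- Let R be a 2-torsion free commutative ring with unity and n ≥ 1. Every commuting map θ on the full matrix algebra Mₙ(R) is proper: there exist λ in the center of Mₙ(R) and an R-linear map μ : Mₙ(R) → Z(Mₙ(R)) such that θ(x) = λ*x + μ(x) for all x. -/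
open Matrix

/-- every commuting map on the full matrix algebra `Mₙ(R)`,
`R` a `2`-torsion free commutative ring with unity and `n ≥ 1`, is proper. -/
theorem matrix_commuting_proper {R : Type*} [CommRing R]
    (htf : ∀ a : R, a + a = 0 → a = 0) (n : ℕ) (hn : 1 ≤ n)
    (θ : Matrix (Fin n) (Fin n) R →ₗ[R] Matrix (Fin n) (Fin n) R)
    (hθ : ∀ x, θ x * x = x * θ x) :
    ∃ l ∈ Set.center (Matrix (Fin n) (Fin n) R),
      ∃ μ : Matrix (Fin n) (Fin n) R →ₗ[R] Matrix (Fin n) (Fin n) R,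
        (∀ x, μ x ∈ Set.center (Matrix (Fin n) (Fin n) R)) ∧ ∀ x, θ x = l * x + μ x := by
  classical
  by_cases h2 : 2 ≤ n
  case neg =>
    -- n = 1 : the algebra is commutative
    have hn1 : n = 1 := by omega
    subst hn1
    have hcomm : ∀ a b : Matrix (Fin 1) (Fin 1) R, a * b = b * a := by
      intro a b
      ext i j
      fin_cases i <;> fin_cases j <;>
        simp [Matrix.mul_apply, Fin.sum_univ_one, mul_comm]
    refine ⟨0, Set.zero_mem_center, θ, fun x => ?_, fun x => by simp⟩
    exact Semigroup.mem_center_iff.mpr fun g => hcomm g (θ x)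
  case pos =>
    haveI : NeZero n := ⟨by omega⟩
    haveI : Nontrivial (Fin n) := Fin.nontrivial_iff_two_le.mpr h2
    set E : Fin n → Fin n → Matrix (Fin n) (Fin n) R :=
      fun p q => Matrix.single p q (1 : R) with hE
    have hEapp : ∀ p q a b : Fin n, E p q a b = if p = a ∧ q = b then 1 else 0 := by
      intro p q a b
      simp [hE, Matrix.single]
    -- entry formulas
    have mulE : ∀ (M : Matrix (Fin n) (Fin n) R) (p q i j : Fin n),
        (M * E p q) i j = if j = q then M i p else 0 := by
      intro M p q i j
      simp only [hE, Matrix.mul_apply, Matrix.single, Matrix.of_apply,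
        mul_ite, mul_one, mul_zero, ite_and]
      rw [Finset.sum_ite_eq (Finset.univ) p (fun k => if q = j then M i k else 0)]
      simp [eq_comm]
    have Emul : ∀ (M : Matrix (Fin n) (Fin n) R) (p q i j : Fin n),
        (E p q * M) i j = if i = p then M q j else 0 := by
      intro M p q i j
      simp only [hE, Matrix.mul_apply, Matrix.single, Matrix.of_apply,
        ite_mul, one_mul, zero_mul, ite_and]
      by_cases hip : p = i
      · subst hip
        simp [Finset.sum_ite_eq Finset.univ q (fun k => M k j)]
      · simp [hip, Ne.symm hip]
    -- the linearized commuting identity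
    have F : ∀ x y : Matrix (Fin n) (Fin n) R,
        θ x * y - y * θ x = x * θ y - θ y * x := by
      intro x y
      have h3 := hθ (x + y)
      rw [map_add, add_mul, mul_add, add_mul, mul_add, hθ x, hθ y] at h3
      linear_combination (norm := noncomm_ring) h3
    -- entrywise key identity
    have key : ∀ p q k l i j : Fin n,
        (if j = l then θ (E p q) i k else 0) - (if i = k then θ (E p q) l j else 0)
          = (if i = p then θ (E k l) q j else 0) - (if j = q then θ (E k l) i p else 0) := by
      intro p q k l i j
      have h := congrFun (congrFun (F (E p q) (E k l)) i) j
      simp only [Matrix.sub_apply] at h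
      rw [mulE (θ (E p q)) k l i j, Emul (θ (E p q)) k l i j,
        Emul (θ (E k l)) p q i j, mulE (θ (E k l)) p q i j] at h
      exact h
    -- fact 1 : off-diagonal entries vanish except at (k,l)
    have fact1 : ∀ k l a b : Fin n, a ≠ b → ¬(a = k ∧ b = l) → θ (E k l) a b = 0 := by
      intro k l a b hab h
      by_cases hbl : b = l
      · have hak : a ≠ k := fun h' => h ⟨h', hbl⟩
        obtain ⟨j0, hjl⟩ := exists_ne l
        have hk := key b j0 k l a j0
        simp only [eq_self_iff_true, if_true, if_neg hjl, if_neg hak, if_neg hab] at hk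
        linear_combination hk
      · obtain ⟨i0, hik⟩ := exists_ne k
        have hk := key i0 a k l i0 b
        simp only [eq_self_iff_true, if_true, if_neg hbl, if_neg hik,
          if_neg (Ne.symm hab)] at hk
        linear_combination -hk
    -- fact 2 : for k ≠ l all diagonal entries of θ(E k l) are equal
    have fact2 : ∀ k l m : Fin n, k ≠ l → θ (E k l) m m = θ (E k l) l l := by
      intro k l m hkl
      by_cases hmk : m = k
      · subst hmk
        have hk := key m l m l m l
        simp only [eq_self_iff_true, if_true] at hk
        have h0 := htf (θ (E m l) m m - θ (E m l) l l) (by linear_combination hk)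
        linear_combination h0
      · have hk := key m l k l m l
        simp only [eq_self_iff_true, if_true, if_neg hmk] at hk
        have hz : θ (E m l) m k = 0 :=
          fact1 m l m k hmk (fun hh => hkl hh.2)
        linear_combination hk - hz
    -- fact 3 : t_{pq} = t_{ql}
    have fact3 : ∀ p q l : Fin n, p ≠ q → l ≠ q →
        θ (E p q) p q = θ (E q l) q l := by
      intro p q l hpq hlq
      have hk := key p q q l p l
      simp only [eq_self_iff_true, if_true, if_neg hpq, if_neg hlq] at hk
      linear_combination hk
    have sym : ∀ p q : Fin n, p ≠ q → θ (E p q) p q = θ (E q p) q p := by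
      intro p q h; exact fact3 p q p h h
    have tall : ∀ p q r s : Fin n, p ≠ q → r ≠ s →
        θ (E p q) p q = θ (E r s) r s := by
      intro p q r s h1 h2
      by_cases hsq : s = q
      · subst hsq
        calc θ (E p s) p s = θ (E s r) s r := fact3 p s r h1 h2
          _ = θ (E r s) r s := (sym r s h2).symm
      · calc θ (E p q) p q = θ (E q s) q s := fact3 p q s h1 hsq
          _ = θ (E s r) s r := fact3 q s r (fun h => hsq h.symm) h2
          _ = θ (E r s) r s := (sym r s h2).symm
    -- the scalar λ
    obtain ⟨i1, hi1⟩ := exists_ne (0 : Fin n)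
    set lam : R := θ (E 0 i1) 0 i1 with hlam
    have hlamt : ∀ p q : Fin n, p ≠ q → θ (E p q) p q = lam := by
      intro p q h; exact tall p q 0 i1 h (Ne.symm hi1)
    -- fact 4 : diagonal of θ(E k k)
    have fact4 : ∀ k p : Fin n, p ≠ k → θ (E k k) p p = θ (E k k) k k - lam := by
      intro k p hpk
      have hk := key p k k k p k
      simp only [eq_self_iff_true, if_true, if_neg hpk] at hk
      have ht := hlamt p k hpk
      linear_combination hk - ht
    -- the structure of θ on basis matrices
    have hAc : ∀ p q : Fin n, θ (E p q)
        = lam • E p q + (θ (E p q) q q - if p = q then lam else 0) • (1 : Matrix (Fin n) (Fin n) R) := by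
      intro p q
      ext a b
      simp only [Matrix.add_apply, Matrix.smul_apply, Matrix.one_apply, hEapp, smul_eq_mul]
      by_cases hab : a = b
      · subst hab
        by_cases hpq : p = q
        · subst hpq
          by_cases hap : p = a
          · subst hap
            simp only [and_self, eq_self_iff_true, if_true]
            ring
          · have h4 := fact4 p a (fun h' => hap h'.symm)
            have hcond : ¬(p = a ∧ p = a) := fun h => hap h.1
            simp only [if_neg hcond, eq_self_iff_true, if_true]
            linear_combination h4
        · have hEaa : ¬(p = a ∧ q = a) := fun h => hpq (h.1.trans h.2.symm)
          simp only [if_neg hEaa, if_neg hpq, eq_self_iff_true, if_true]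
          have h2' := fact2 p q a hpq
          linear_combination h2'
      · by_cases h : p = a ∧ q = b
        · obtain ⟨rfl, rfl⟩ := h
          simp only [and_self, eq_self_iff_true, if_true, if_neg hab]
          have ht := hlamt p q hab
          linear_combination ht
        · simp only [if_neg h, if_neg hab]
          have hz := fact1 p q a b hab (fun hh => h ⟨hh.1.symm, hh.2.symm⟩)
          linear_combination hz
    -- decomposition of an arbitrary matrix
    have hsum : ∀ x : Matrix (Fin n) (Fin n) R,
        x = ∑ p : Fin n, ∑ q : Fin n, x p q • E p q := by
      intro x
      conv_lhs => rw [matrix_eq_sum_single x]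
      refine Finset.sum_congr rfl fun p _ => Finset.sum_congr rfl fun q _ => ?_
      simp only [hE]
      rw [smul_single, smul_eq_mul, mul_one]
    have hθx : ∀ x : Matrix (Fin n) (Fin n) R,
        θ x = lam • x
          + (∑ p : Fin n, ∑ q : Fin n,
              x p q * (θ (E p q) q q - if p = q then lam else 0)) • (1 : Matrix (Fin n) (Fin n) R) := by
      intro x
      have e1 : θ x = ∑ p : Fin n, ∑ q : Fin n, x p q • θ (E p q) := by
        conv_lhs => rw [hsum x]
        rw [map_sum]
        refine Finset.sum_congr rfl fun p _ => ?_
        rw [map_sum]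
        exact Finset.sum_congr rfl fun q _ => θ.map_smul _ _
      have e2 : ∀ p q : Fin n, x p q • θ (E p q)
          = (lam * x p q) • E p q
            + (x p q * (θ (E p q) q q - if p = q then lam else 0)) • (1 : Matrix (Fin n) (Fin n) R) := by
        intro p q
        conv_lhs => rw [hAc p q]
        rw [smul_add, smul_smul, smul_smul, mul_comm (x p q) lam]
      rw [e1]
      simp only [e2]
      simp only [Finset.sum_add_distrib]
      congr 1
      · simp only [mul_smul, ← Finset.smul_sum]
        rw [← hsum x]
      · simp only [Finset.sum_smul]
    -- assemble
    refine ⟨lam • 1, ?_,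
      θ - lam • (LinearMap.id : Matrix (Fin n) (Fin n) R →ₗ[R] Matrix (Fin n) (Fin n) R),
      fun x => ?_, fun x => ?_⟩
    · exact Semigroup.mem_center_iff.mpr fun g => by
        rw [mul_smul_comm, mul_one, smul_mul_assoc, one_mul]
    · refine Semigroup.mem_center_iff.mpr fun g => ?_
      have hx : (θ - lam • (LinearMap.id :
            Matrix (Fin n) (Fin n) R →ₗ[R] Matrix (Fin n) (Fin n) R)) x
          = (∑ p : Fin n, ∑ q : Fin n,
              x p q * (θ (E p q) q q - if p = q then lam else 0)) • (1 : Matrix (Fin n) (Fin n) R) := by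
        rw [LinearMap.sub_apply, LinearMap.smul_apply, LinearMap.id_apply, hθx x]
        abel
      rw [hx, mul_smul_comm, mul_one, smul_mul_assoc, one_mul]
    · rw [LinearMap.sub_apply, LinearMap.smul_apply, LinearMap.id_apply,
        smul_mul_assoc, one_mul]
      abel
end

section
/- Let R be a 2-torsion free commutative ring with unity and n ≥ 1. Every commuting map θ on the algebra Tₙ(R) of upper triangular n×n matrices over R is proper: there exist a central element λ of Tₙ(R) and an R-linear map μ : Tₙ(R) → Z(Tₙ(R)) such that θ(x) = λ*x + μ(x) for all x. -/
set_option maxHeartbeats 1000000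
set_option synthInstance.maxHeartbeats 400000

/-- The algebra `Tₙ(R)` of upper triangular `n × n` matrices over `R`. -/
def TriAlg (n : ℕ) (R : Type*) [CommRing R] : Subalgebra R (Matrix (Fin n) (Fin n) R) where
  carrier := {a | ∀ i j : Fin n, j < i → a i j = 0}
  mul_mem' := by
    intro a b ha hb i j hij
    rw [Matrix.mul_apply]
    refine Finset.sum_eq_zero fun k _ => ?_
    rcases lt_or_ge k i with hk | hk
    · rw [ha i k hk, zero_mul]
    · rw [hb k j (lt_of_lt_of_le hij hk), mul_zero]
  add_mem' := by
    intro a b ha hb i j hij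
    simp [Matrix.add_apply, ha i j hij, hb i j hij]
  algebraMap_mem' := by
    intro r i j hij
    rw [Matrix.algebraMap_eq_diagonal]
    exact Matrix.diagonal_apply_ne _ (ne_of_gt hij)

namespace TriProof

open Matrix

variable {R : Type*} [CommRing R] {n : ℕ}

lemma e_mem {i j : Fin n} (h : i ≤ j) : Matrix.single i j (1 : R) ∈ TriAlg n R := by
  intro s t hst
  apply Matrix.single_apply_of_ne
  rintro ⟨rfl, rfl⟩
  exact absurd h (not_le.mpr hst)

def E (i j : Fin n) (h : i ≤ j) : TriAlg n R := ⟨Matrix.single i j 1, e_mem h⟩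

@[simp] lemma E_coe (i j : Fin n) (hij : i ≤ j) :
    ((E i j hij : TriAlg n R) : Matrix (Fin n) (Fin n) R) = Matrix.single i j 1 := rfl

lemma mulE (M : Matrix (Fin n) (Fin n) R) (k l s t : Fin n) :
    (M * Matrix.single k l (1 : R)) s t = if t = l then M s k else 0 := by
  split_ifs with h
  · subst h; rw [Matrix.mul_single_apply_same, mul_one]
  · exact Matrix.mul_single_apply_of_ne (c := 1) k l s t h M

lemma Emul (M : Matrix (Fin n) (Fin n) R) (k l s t : Fin n) :
    (Matrix.single k l (1 : R) * M) s t = if s = k then M l t else 0 := by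
  split_ifs with h
  · subst h; rw [Matrix.single_mul_apply_same, one_mul]
  · exact Matrix.single_mul_apply_of_ne (c := 1) k l s t h M

variable (θ : TriAlg n R →ₗ[R] TriAlg n R)

/-- the matrix of `θ` applied to a matrix unit -/
def T (i j : Fin n) (hij : i ≤ j) : Matrix (Fin n) (Fin n) R :=
  ((θ (E i j hij) : TriAlg n R) : Matrix (Fin n) (Fin n) R)

variable (hθ : ∀ x, θ x * x = x * θ x)
include hθ

lemma lin (x y : TriAlg n R) : θ x * y + θ y * x = x * θ y + y * θ x := by
  have h := hθ (x + y)
  simp only [map_add, add_mul, mul_add] at h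
  rw [hθ x, hθ y] at h
  rw [← sub_eq_zero] at h ⊢
  rw [← h]; abel

omit hθ in
lemma entry_eq {a b : TriAlg n R} (h : a = b) (s t : Fin n) :
    (a : Matrix (Fin n) (Fin n) R) s t = (b : Matrix (Fin n) (Fin n) R) s t := by rw [h]

lemma master {i j k l : Fin n} (hij : i ≤ j) (hkl : k ≤ l) (s t : Fin n) :
    (if t = l then T θ i j hij s k else 0) + (if t = j then T θ k l hkl s i else 0)
      = (if s = i then T θ k l hkl j t else 0) + (if s = k then T θ i j hij l t else 0) := by
  have h2 := entry_eq (lin θ hθ (E i j hij) (E k l hkl)) s t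
  simp only [Subalgebra.coe_add, Subalgebra.coe_mul, E_coe, Matrix.add_apply,
    mulE, Emul] at h2
  exact h2

lemma self_comm {i j : Fin n} (hij : i ≤ j) (s t : Fin n) :
    (if t = j then T θ i j hij s i else 0) = (if s = i then T θ i j hij j t else 0) := by
  have h2 := entry_eq (hθ (E i j hij)) s t
  simp only [Subalgebra.coe_mul, E_coe, mulE, Emul] at h2
  exact h2



lemma D_off (k s t : Fin n) (hst : s ≠ t) : T θ k k le_rfl s t = 0 := by
  by_cases hsk : s = k
  · subst hsk
    have h := self_comm θ hθ (le_refl s) s t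
    simpa [Ne.symm hst] using h.symm
  · by_cases htk : t = k
    · subst htk
      have h := self_comm θ hθ (le_refl t) s t
      simpa [hsk] using h
    · have h := master θ hθ (le_refl k) (le_refl t) s t
      simpa [htk, hsk, hst] using h

lemma D_diag_le (k p q : Fin n) (hpq : p ≤ q) (hp : p ≠ k) (hq : q ≠ k) :
    T θ k k le_rfl p p = T θ k k le_rfl q q := by
  have h := master θ hθ (le_refl k) hpq p q
  simpa [hp, hq] using h

lemma D_diag (k p q : Fin n) (hp : p ≠ k) (hq : q ≠ k) :
    T θ k k le_rfl p p = T θ k k le_rfl q q := by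
  rcases le_total p q with h | h
  · exact D_diag_le θ hθ k p q h hp hq
  · exact (D_diag_le θ hθ k q p h hq hp).symm

lemma B_off {i j : Fin n} (hij : i ≤ j) (hne : i ≠ j) (s t : Fin n) (hst : s ≠ t)
    (h2 : ¬(s = i ∧ t = j)) : T θ i j hij s t = 0 := by
  by_cases hti : t = i
  · subst hti
    have h := self_comm θ hθ hij s j
    simpa [hst] using h
  · by_cases hsj : s = j
    · subst hsj
      have h := self_comm θ hθ hij i t
      simpa [Ne.symm hst] using h.symm
    · by_cases htj : t = j
      · subst htj
        have hsi : s ≠ i := fun h => h2 ⟨h, rfl⟩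
        have h0 : T θ s s le_rfl s i = 0 := D_off θ hθ s s i hsi
        have h := master θ hθ hij (le_refl s) s t
        simp only [if_neg (Ne.symm hsj), if_pos rfl, if_neg hsi, zero_add, add_zero, h0] at h
        exact h.symm
      · have h0 : T θ t t le_rfl j t = 0 := D_off θ hθ t j t (Ne.symm htj)
        have h := master θ hθ hij (le_refl t) s t
        simpa [htj, hst, h0] using h

lemma B_diag {i j : Fin n} (hij : i ≤ j) (hne : i ≠ j) (p : Fin n) :
    T θ i j hij p p = T θ i j hij j j := by
  by_cases hpj : p = j
  · rw [hpj]
  · by_cases hpi : p = i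
    · subst hpi
      have h := self_comm θ hθ hij p j
      simpa using h
    · rcases lt_or_gt_of_ne hpj with hlt | hgt
      · have h0 : T θ p j (le_of_lt hlt) p i = 0 :=
          B_off θ hθ (le_of_lt hlt) (ne_of_lt hlt) p i hpi (fun h => hne h.2)
        have hm := master θ hθ hij (le_of_lt hlt) p j
        simpa [hpi, h0] using hm
      · have hm := master θ hθ hij (le_of_lt hgt) j p
        simpa [hpj, Ne.symm hne, ne_of_gt hgt] using hm.symm

lemma corner {i j : Fin n} (hij : i ≤ j) (hne : i ≠ j) :
    T θ i i le_rfl i i = T θ i i le_rfl j j + T θ i j hij i j := by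
  have hm := master θ hθ hij (le_refl i) i j
  simpa [Ne.symm hne] using hm

lemma corner' {i j : Fin n} (hij : i ≤ j) (hne : i ≠ j) :
    T θ i j hij i j + T θ j j le_rfl i i = T θ j j le_rfl j j := by
  have hm := master θ hθ hij (le_refl j) i j
  simpa [hne] using hm



variable (k0 k1 : Fin n)

def lam : R := T θ k0 k0 le_rfl k0 k0 - T θ k0 k0 le_rfl k1 k1

omit hθ in
lemma k1_ne_k0 (hk0 : (k0 : ℕ) = 0) (hk1 : (k1 : ℕ) = 1) : k1 ≠ k0 := by
  intro h; rw [h] at hk1; omega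

lemma lam_spec (hk0 : (k0 : ℕ) = 0) (hk1 : (k1 : ℕ) = 1) (k p : Fin n) (hpk : p ≠ k) :
    T θ k k le_rfl k k - T θ k k le_rfl p p = lam θ k0 k1 := by
  have h01 : k1 ≠ k0 := k1_ne_k0 k0 k1 hk0 hk1
  by_cases hk : k = k0
  · subst hk
    rw [lam, D_diag θ hθ k p k1 hpk h01]
  · have hle : k0 ≤ k := by rw [Fin.le_def, hk0]; exact Nat.zero_le _
    have hne : k0 ≠ k := fun h => hk h.symm
    have c1 := corner θ hθ hle hne
    have c2 := corner' θ hθ hle hne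
    have d1 : T θ k0 k0 le_rfl k1 k1 = T θ k0 k0 le_rfl k k := D_diag θ hθ k0 k1 k h01 hk
    have d2 : T θ k k le_rfl k0 k0 = T θ k k le_rfl p p := D_diag θ hθ k k0 p hne hpk
    rw [lam]
    linear_combination d1 + d2 - c1 - c2

lemma key (hk0 : (k0 : ℕ) = 0) (hk1 : (k1 : ℕ) = 1) (i j : Fin n) (hij : i ≤ j) :
    ∃ c : R, ∀ s t : Fin n, T θ i j hij s t =
      lam θ k0 k1 * Matrix.single i j 1 s t + (if s = t then c else 0) := by
  by_cases hne : i = j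
  · subst hne
    obtain ⟨p, hp⟩ : ∃ p : Fin n, p ≠ i := by
      by_cases h : i = k0
      · exact ⟨k1, fun hh => k1_ne_k0 k0 k1 hk0 hk1 (hh.trans h)⟩
      · exact ⟨k0, fun hh => h hh.symm⟩
    refine ⟨T θ i i hij p p, fun s t => ?_⟩
    by_cases hst : s = t
    · subst hst
      rw [if_pos rfl]
      by_cases hsi : s = i
      · subst hsi
        have hl := lam_spec θ hθ k0 k1 hk0 hk1 s p hp
        rw [Matrix.single_apply_same, mul_one]
        linear_combination hl
      · have hd := D_diag θ hθ i s p hsi hp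
        rw [Matrix.single_apply_of_ne i i 1 s s (fun h : i = s ∧ i = s => hsi h.1.symm), mul_zero, zero_add]
        exact hd
    · have h0 := D_off θ hθ i s t hst
      rw [Matrix.single_apply_of_ne i i 1 s t (fun h : i = s ∧ i = t => hst (h.1.symm.trans h.2)),
        mul_zero, zero_add, if_neg hst]
      exact h0
  · refine ⟨T θ i j hij j j, fun s t => ?_⟩
    by_cases hst : s = t
    · subst hst
      have hd := B_diag θ hθ hij hne s
      rw [Matrix.single_apply_of_ne i j 1 s s (fun h : i = s ∧ j = s => hne (h.1.trans h.2.symm)),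
        mul_zero, zero_add, if_pos rfl]
      exact hd
    · rw [if_neg hst, add_zero]
      by_cases hsij : s = i ∧ t = j
      · obtain ⟨rfl, rfl⟩ := hsij
        have c1 := corner θ hθ hij hne
        have hl := lam_spec θ hθ k0 k1 hk0 hk1 s t (Ne.symm hne)
        rw [Matrix.single_apply_same, mul_one]
        linear_combination hl - c1
      · have h0 := B_off θ hθ hij hne s t hst hsij
        rw [Matrix.single_apply_of_ne i j 1 s t (fun h : i = s ∧ j = t => hsij ⟨h.1.symm, h.2.symm⟩), mul_zero]
        exact h0



omit hθ in
lemma span_basis (p : Submodule R ↥(TriAlg n R))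
    (hp : ∀ (i j : Fin n) (hij : i ≤ j), E i j hij ∈ p) (x : ↥(TriAlg n R)) : x ∈ p := by
  have hx : x = ∑ q : Fin n × Fin n,
      ((x : Matrix (Fin n) (Fin n) R) q.1 q.2) • (if h : q.1 ≤ q.2 then E q.1 q.2 h else 0) := by
    apply Subtype.ext
    rw [AddSubmonoidClass.coe_finset_sum]
    ext s t
    rw [Matrix.sum_apply]
    have hterm : ∀ q ∈ (Finset.univ : Finset (Fin n × Fin n)),
        ((((x : Matrix (Fin n) (Fin n) R) q.1 q.2 •
            (if h : q.1 ≤ q.2 then E q.1 q.2 h else 0) : TriAlg n R) :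
            Matrix (Fin n) (Fin n) R)) s t
        = if q = (s, t) then (x : Matrix (Fin n) (Fin n) R) s t else 0 := by
      rintro ⟨a, b⟩ -
      by_cases hab : a ≤ b
      · simp only [dif_pos hab, SetLike.val_smul, Matrix.smul_apply, E_coe,
          Matrix.single, Matrix.of_apply, smul_eq_mul, mul_ite, mul_one, mul_zero,
          Prod.mk.injEq]
        split_ifs with h
        · rw [h.1, h.2]
        · rfl
      · simp only [dif_neg hab, smul_zero, ZeroMemClass.coe_zero, Matrix.zero_apply,
          Prod.mk.injEq]
        split_ifs with h
        · exact (x.2 s t (by rw [← h.1, ← h.2]; exact not_le.mp hab)).symm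
        · rfl
    rw [Finset.sum_congr rfl hterm, Finset.sum_ite_eq' Finset.univ (s, t)]
    simp
  rw [hx]
  exact Submodule.sum_mem _ fun q _ => Submodule.smul_mem _ _ (by
    by_cases h : q.1 ≤ q.2
    · rw [dif_pos h]; exact hp _ _ h
    · rw [dif_neg h]; exact p.zero_mem)

omit hθ

lemma scalar_central (r : R) : (r • (1 : TriAlg n R)) ∈ Set.center ↥(TriAlg n R) :=
  Semigroup.mem_center_iff.mpr fun g => by
    rw [mul_smul_comm, smul_mul_assoc, mul_one, one_mul]

def Zc : Submodule R ↥(TriAlg n R) where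
  carrier := Set.center ↥(TriAlg n R)
  add_mem' := fun ha hb => Set.add_mem_center ha hb
  zero_mem' := Set.zero_mem_center
  smul_mem' := fun r a ha => Semigroup.mem_center_iff.mpr fun g => by
    rw [mul_smul_comm, smul_mul_assoc, Semigroup.mem_center_iff.mp ha g]

end TriProof

/-- every commuting map on `Tₙ(R)`, `R` `2`-torsion free with unity, `n ≥ 1`,
is proper. -/
theorem triangular_commuting_proper {R : Type*} [CommRing R]
    (htf : ∀ a : R, a + a = 0 → a = 0) (n : ℕ) (hn : 1 ≤ n)
    (θ : TriAlg n R →ₗ[R] TriAlg n R) (hθ : ∀ x, θ x * x = x * θ x) :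
    ∃ l ∈ Set.center (TriAlg n R), ∃ μ : TriAlg n R →ₗ[R] TriAlg n R,
      (∀ x, μ x ∈ Set.center (TriAlg n R)) ∧ ∀ x, θ x = l * x + μ x := by
  classical
  by_cases h2 : 2 ≤ n
  · have hn0 : 0 < n := by omega
    have hn1 : 1 < n := by omega
    set k0 : Fin n := ⟨0, hn0⟩ with hk0def
    set k1 : Fin n := ⟨1, hn1⟩ with hk1def
    have hk0 : (k0 : ℕ) = 0 := rfl
    have hk1 : (k1 : ℕ) = 1 := rfl
    set l : R := TriProof.lam θ k0 k1 with hl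
    set ψ : TriAlg n R →ₗ[R] TriAlg n R := θ - l • (LinearMap.id : TriAlg n R →ₗ[R] TriAlg n R) with hψ
    refine ⟨l • 1, TriProof.scalar_central l, ψ, fun x => ?_, fun x => ?_⟩
    · refine TriProof.span_basis (Submodule.comap ψ TriProof.Zc) ?_ x
      intro i j hij
      rw [Submodule.mem_comap]
      obtain ⟨c, hc⟩ := TriProof.key θ hθ k0 k1 hk0 hk1 i j hij
      have heq : ψ (TriProof.E i j hij) = c • (1 : TriAlg n R) := by
        apply Subtype.ext
        ext s t
        have hc' := hc s t
        rw [TriProof.T] at hc'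
        simp only [hψ, LinearMap.sub_apply, LinearMap.smul_apply, LinearMap.id_apply,
          AddSubgroupClass.coe_sub, SetLike.val_smul, Matrix.sub_apply, Matrix.smul_apply,
          TriProof.E_coe, OneMemClass.coe_one, Matrix.one_apply, smul_eq_mul, mul_ite,
          mul_one, mul_zero]
        rw [hc', hl]
        ring_nf
      show ψ (TriProof.E i j hij) ∈ TriProof.Zc
      rw [heq]
      exact TriProof.scalar_central c
    · simp only [hψ, LinearMap.sub_apply, LinearMap.smul_apply, LinearMap.id_apply]
      rw [smul_mul_assoc, one_mul]
      abel
  · obtain rfl : n = 1 := by omega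
    have hcomm : ∀ a b : TriAlg 1 R, a * b = b * a := by
      intro a b
      apply Subtype.ext
      rw [MulMemClass.coe_mul, MulMemClass.coe_mul]
      ext s t
      rw [Matrix.mul_apply, Matrix.mul_apply, Fin.sum_univ_one, Fin.sum_univ_one]
      have hs : s = 0 := Subsingleton.elim s 0
      have ht : t = 0 := Subsingleton.elim t 0
      subst hs; subst ht
      exact mul_comm _ _
    refine ⟨0, Set.zero_mem_center, θ, fun x => ?_, fun x => by rw [zero_mul, zero_add]⟩
    exact Semigroup.mem_center_iff.mpr fun g => hcomm g (θ x)
end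

section
/- Let R be a nontrivial commutative ring (with 1 ≠ 0). The commuting map θ on the algebra A of the previous statement (matrices with possibly nonzero entries (1,1),(2,2),(3,3),(1,3),(2,3), θ(a) having diagonal (a(1,1), a(3,3), a(3,3)) and (1,3)-entry a(1,3)) is improper: there do not exist a central element λ of A and an R-linear map μ : A → Z(A) with θ(x) = λ*x + μ(x) for all x ∈ A. -/
/-- The incidence algebra of the poset `1 ← 3 → 2` realized inside `M₃(R)`:
matrices supported on positions `(0,0), (1,1), (2,2), (0,2), (1,2)` (`0`-based). -/
def ExAlg (R : Type*) [CommRing R] : Subalgebra R (Matrix (Fin 3) (Fin 3) R) where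
  carrier := {a | a 0 1 = 0 ∧ a 1 0 = 0 ∧ a 2 0 = 0 ∧ a 2 1 = 0}
  mul_mem' := by
    rintro a b ⟨ha1, ha2, ha3, ha4⟩ ⟨hb1, hb2, hb3, hb4⟩
    refine ⟨?_, ?_, ?_, ?_⟩ <;>
      simp [Matrix.mul_apply, Fin.sum_univ_three, ha1, ha2, ha3, ha4, hb1, hb2, hb3, hb4]
  add_mem' := by
    rintro a b ⟨ha1, ha2, ha3, ha4⟩ ⟨hb1, hb2, hb3, hb4⟩
    refine ⟨?_, ?_, ?_, ?_⟩ <;> simp [Matrix.add_apply, *]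
  algebraMap_mem' := by
    intro r
    refine ⟨?_, ?_, ?_, ?_⟩ <;>
      simp [Matrix.algebraMap_eq_diagonal, Matrix.diagonal_apply_ne]

/-- The map `θ` sending `a` to the matrix with diagonal `(a₁₁, a₃₃, a₃₃)` and
`(1,3)`-entry `a₁₃` (here `0`-based: diagonal `(a 0 0, a 2 2, a 2 2)`, entry `(0,2)`). -/
def thetaMat {R : Type*} [CommRing R] (a : Matrix (Fin 3) (Fin 3) R) :
    Matrix (Fin 3) (Fin 3) R :=
  Matrix.of ![![a 0 0, 0, a 0 2], ![0, a 2 2, 0], ![0, 0, a 2 2]]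

theorem thetaMat_mem {R : Type*} [CommRing R] (a : Matrix (Fin 3) (Fin 3) R) :
    thetaMat a ∈ ExAlg R := by
  refine ⟨rfl, rfl, rfl, rfl⟩

/-- `θ` as an `R`-linear map on the algebra `ExAlg R`. -/
def theta (R : Type*) [CommRing R] : ExAlg R →ₗ[R] ExAlg R where
  toFun a := ⟨thetaMat a.1, thetaMat_mem a.1⟩
  map_add' a b := by
    ext i j
    fin_cases i <;> fin_cases j <;> simp [thetaMat]
  map_smul' r a := by
    ext i j
    fin_cases i <;> fin_cases j <;> simp [thetaMat]

/-- the commuting map `θ` on `ExAlg R` is improper for nontrivial `R`: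
there are no central `λ` and `R`-linear central-valued `μ` with `θ(x) = λ*x + μ(x)`. -/
theorem theta_improper (R : Type*) [CommRing R] [Nontrivial R] :
    ¬ ∃ l ∈ Set.center (ExAlg R), ∃ μ : ExAlg R →ₗ[R] ExAlg R,
        (∀ x, μ x ∈ Set.center (ExAlg R)) ∧ ∀ x, theta R x = l * x + μ x := by
  rintro ⟨l, hl, μ, hμ, h⟩
  have hE00 : (Matrix.of ![![(1:R),0,0],![0,0,0],![0,0,0]]) ∈ ExAlg R := ⟨rfl, rfl, rfl, rfl⟩
  have hE02 : (Matrix.of ![![(0:R),0,1],![0,0,0],![0,0,0]]) ∈ ExAlg R := ⟨rfl, rfl, rfl, rfl⟩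
  have hE12 : (Matrix.of ![![(0:R),0,0],![0,0,1],![0,0,0]]) ∈ ExAlg R := ⟨rfl, rfl, rfl, rfl⟩
  have hD2 : (Matrix.of ![![(0:R),0,0],![0,0,0],![0,0,1]]) ∈ ExAlg R := ⟨rfl, rfl, rfl, rfl⟩
  set E00 : ExAlg R := ⟨_, hE00⟩ with hE00'
  set E02 : ExAlg R := ⟨_, hE02⟩ with hE02'
  set E12 : ExAlg R := ⟨_, hE12⟩ with hE12'
  set D2 : ExAlg R := ⟨_, hD2⟩ with hD2'
  have key : ∀ (x y : ExAlg R) (i j : Fin 3), x * y = y * x →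
      ∑ k, (x : Matrix (Fin 3) (Fin 3) R) i k * (y : Matrix (Fin 3) (Fin 3) R) k j
        = ∑ k, (y : Matrix (Fin 3) (Fin 3) R) i k * (x : Matrix (Fin 3) (Fin 3) R) k j := by
    intro x y i j hxy
    have := congrFun (congrFun (congrArg Subtype.val hxy) i) j
    simpa only [MulMemClass.coe_mul, Matrix.mul_apply] using this
  -- centrality of l gives l00 = l22 = l11
  have hc1 := key l E02 0 2 (hl.comm E02)
  have hc2 := key l E12 1 2 (hl.comm E12)
  simp [hE02', hE12', Fin.sum_univ_three, Matrix.vecHead, Matrix.vecTail] at hc1 hc2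
  -- μ(E12) has zero (1,2)-entry
  have hm12 := key (μ E12) D2 1 2 ((hμ E12).comm D2)
  simp [hD2', Fin.sum_univ_three, Matrix.vecHead, Matrix.vecTail,
    (μ E12).2.2.2.2] at hm12
  -- μ(E00) entries : (0,0) = (2,2) and (1,1) = (2,2)
  have hm1 := key (μ E00) E02 0 2 ((hμ E00).comm E02)
  have hm2 := key (μ E00) E12 1 2 ((hμ E00).comm E12)
  simp [hE02', hE12', Fin.sum_univ_three, Matrix.vecHead, Matrix.vecTail] at hm1 hm2
  -- main equations
  have eqn : ∀ (x : ExAlg R) (i j : Fin 3),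
      thetaMat (x : Matrix (Fin 3) (Fin 3) R) i j
        = (∑ k, (l : Matrix (Fin 3) (Fin 3) R) i k * (x : Matrix (Fin 3) (Fin 3) R) k j)
          + (μ x : Matrix (Fin 3) (Fin 3) R) i j := by
    intro x i j
    have := congrFun (congrFun (congrArg Subtype.val (h x)) i) j
    simpa only [theta, LinearMap.coe_mk, AddHom.coe_mk, AddMemClass.coe_add,
      MulMemClass.coe_mul, Matrix.add_apply, Matrix.mul_apply] using this
  have h1 := eqn E12 1 2
  have h2 := eqn E00 0 0
  have h3 := eqn E00 1 1
  simp [hE00', hE12', thetaMat, Fin.sum_univ_three, Matrix.vecHead, Matrix.vecTail] at h1 h2 h3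
  rw [hm12] at h1
  have : (1 : R) = 0 := by
    rw [h2, hm1, ← hm2, ← h3, hc1, ← hc2, ← h1]
  exact one_ne_zero this
end

section
/- Let X be a finite preordered set, R a commutative ring, and θ a commuting map on the incidence algebra I(X,R). Then for each i ∈ X, θ(e_{ii}) is a diagonal element: θ(e_{ii}) = Σ_{x∈X} C_x e_{xx} for some coefficients C_x ∈ R; i.e., θ(e_{ii})(x,y) = 0 whenever x ≠ y. -/
variable {X R : Type*} [Preorder X] [LocallyFiniteOrder X] [DecidableEq X] [CommRing R]

/-- Membership in the incidence algebra `I(X,R)`: supported on pairs `x ≤ y`. -/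
def IsInc (f : X → X → R) : Prop := ∀ x y : X, ¬ x ≤ y → f x y = 0

/-- The convolution product of the incidence algebra. -/
def conv (f g : X → X → R) : X → X → R :=
  fun x y => ∑ z ∈ Finset.Icc x y, f x z * g z y

/-- The matrix unit `e_{ij}` of the incidence algebra. -/
def eunit (i j : X) : X → X → R := fun x y => if x = i ∧ y = j then 1 else 0

/-- A commuting map on the incidence algebra: an `R`-linear map `θ : I(X,R) → I(X,R)`
with `[θ(f), f] = 0` for all `f`. -/
structure IsCommMap (θ : (X → X → R) → X → X → R) : Prop where
  map_inc : ∀ f, IsInc f → IsInc (θ f)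
  map_add : ∀ f g, IsInc f → IsInc g → θ (f + g) = θ f + θ g
  map_smul : ∀ (r : R) (f), IsInc f → θ (r • f) = r • θ f
  comm : ∀ f, IsInc f → conv (θ f) f = conv f (θ f)

lemma isInc_eunit (j : X) : IsInc (eunit j j : X → X → R) := by
  intro x y h
  simp only [eunit, ite_eq_right_iff]
  rintro ⟨rfl, rfl⟩
  exact absurd le_rfl h

lemma isInc_add {f g : X → X → R} (hf : IsInc f) (hg : IsInc g) : IsInc (f + g) := by
  intro x y h; simp [hf x y h, hg x y h]

lemma conv_add_left (f g h : X → X → R) : conv (f + g) h = conv f h + conv g h := by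
  funext x y; simp [conv, add_mul, Finset.sum_add_distrib]

lemma conv_add_right (f g h : X → X → R) : conv f (g + h) = conv f g + conv f h := by
  funext x y; simp [conv, mul_add, Finset.sum_add_distrib]

lemma conv_eunit_right (f : X → X → R) (j x y : X) :
    conv f (eunit j j) x y = if y = j ∧ j ∈ Finset.Icc x y then f x j else 0 := by
  by_cases hy : y = j
  · subst hy
    simp only [conv, eunit, mul_ite, mul_one, mul_zero, and_true, true_and]
    exact Finset.sum_ite_eq' _ _ _
  · simp [conv, eunit, hy]

lemma conv_eunit_left (f : X → X → R) (j x y : X) :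
    conv (eunit j j) f x y = if x = j ∧ j ∈ Finset.Icc x y then f j y else 0 := by
  by_cases hx : x = j
  · subst hx
    simp only [conv, eunit, ite_mul, one_mul, zero_mul, true_and, and_true]
    exact Finset.sum_ite_eq' _ _ (fun z => f z y)
  · simp [conv, eunit, hx]

lemma bilin {θ : (X → X → R) → X → X → R} (hθ : IsCommMap θ) {f g : X → X → R}
    (hf : IsInc f) (hg : IsInc g) :
    conv (θ f) g + conv (θ g) f = conv f (θ g) + conv g (θ f) := by
  have h := hθ.comm (f + g) (isInc_add hf hg)
  rw [hθ.map_add f g hf hg] at h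
  simp only [conv_add_left, conv_add_right] at h
  rw [hθ.comm f hf, hθ.comm g hg] at h
  have := congrArg (fun k => k - conv f (θ f) - conv g (θ g)) h
  funext x y
  have := congrFun (congrFun this x) y
  simp only [Pi.add_apply, Pi.sub_apply] at this ⊢
  linear_combination this

/-- for `X` a finite preordered set, a commuting map `θ` on `I(X,R)` sends
each idempotent `e_{ii}` to a diagonal element: `θ(e_{ii})(x,y) = 0` whenever `x ≠ y`. -/
theorem theta_eii_diagonal [Finite X]
    (θ : (X → X → R) → X → X → R) (hθ : IsCommMap θ) :
    ∀ i x y : X, x ≠ y → θ (eunit i i) x y = 0 := by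
  intro i x y hxy
  by_cases hle : x ≤ y
  swap
  · exact hθ.map_inc _ (isInc_eunit i) x y hle
  have hcomm := hθ.comm (eunit i i) (isInc_eunit i)
  by_cases hx : x = i
  · subst hx
    have h := congrFun (congrFun hcomm x) y
    rw [conv_eunit_right, conv_eunit_left] at h
    have hy : y ≠ x := hxy.symm
    simp [hy, hxy, Finset.mem_Icc, hle] at h
    exact h.symm
  · by_cases hy : y = i
    · subst hy
      have h := congrFun (congrFun hcomm x) y
      rw [conv_eunit_right, conv_eunit_left] at h
      simp [hx, hxy, Ne.symm hxy, Finset.mem_Icc, hle] at h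
      exact h
    · have h := congrFun (congrFun (bilin hθ (isInc_eunit i) (isInc_eunit y) (R := R)) x) y
      simp only [Pi.add_apply] at h
      rw [conv_eunit_right, conv_eunit_right, conv_eunit_left, conv_eunit_left] at h
      simp [hx, hy, hxy, Ne.symm hxy, Finset.mem_Icc, hle] at h
      exact h
end

section
/- Let X be a locally finite preordered set, R a commutative ring, and θ a commuting map on I(X,R). For all f ∈ I(X,R) and all x < y: θ(f)(x,y) = θ(f|ₓʸ)(x,y), where f|ₓʸ is the restriction of f to the interval [x,y]. -/
variable {X R : Type*} [Preorder X] [LocallyFiniteOrder X] [DecidableEq X] [CommRing R]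

/-- The restriction `f|ₓʸ` of `f` to the interval `[x,y]`. -/
def restrict [DecidableRel (α := X) (· ≤ ·)] (f : X → X → R) (x y : X) : X → X → R :=
  fun u v => if x ≤ u ∧ u ≤ v ∧ v ≤ y then f u v else 0

/-- Polarization of the commuting condition. -/
lemma polarize_pt (θ : (X → X → R) → X → X → R) (hθ : IsCommMap θ)
    (f g : X → X → R) (hf : IsInc f) (hg : IsInc g) (x y : X) :
    conv (θ f) g x y + conv (θ g) f x y = conv f (θ g) x y + conv g (θ f) x y := by
  have hfg : IsInc (f + g) := fun u v h => by
    simp [Pi.add_apply, hf u v h, hg u v h]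
  have h := congrFun (congrFun (hθ.comm (f + g) hfg) x) y
  rw [hθ.map_add f g hf hg] at h
  have h1 := congrFun (congrFun (hθ.comm f hf) x) y
  have h2 := congrFun (congrFun (hθ.comm g hg) x) y
  simp only [conv, Pi.add_apply, add_mul, mul_add, Finset.sum_add_distrib] at h h1 h2 ⊢
  linear_combination h - h1 - h2

/-- for a commuting map `θ` on `I(X,R)` with `X` locally finite and `x < y`,
`θ(f)(x,y) = θ(f|ₓʸ)(x,y)`. -/
theorem theta_restrict [DecidableRel (α := X) (· ≤ ·)]
    (θ : (X → X → R) → X → X → R) (hθ : IsCommMap θ) :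
    ∀ f, IsInc f → ∀ x y : X, x ≤ y → x ≠ y → θ f x y = θ (restrict f x y) x y := by
  intro f hf x y hxy hne
  set r : X → X → R := restrict f x y with hrdef
  have hr : IsInc r := by
    intro u v h
    simp only [hrdef, restrict]
    rw [if_neg]
    rintro ⟨-, h2, -⟩
    exact h h2
  set g : X → X → R := f - r with hgdef
  have hg : IsInc g := by
    intro u v h
    simp [hgdef, hf u v h, hr u v h]
  have hfeq : f = g + r := by funext u v; simp [hgdef]
  have hsplit : θ f x y = θ g x y + θ r x y := by
    rw [hfeq, hθ.map_add g r hg hr]; rfl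
  set e : X → X → R := fun u v => if u = x ∧ v = x then 1 else 0 with hedef
  have he : IsInc e := by
    intro u v h
    simp only [hedef]
    rw [if_neg]
    rintro ⟨rfl, rfl⟩
    exact h le_rfl
  have key := polarize_pt θ hθ g e hg he x y
  have hgz : ∀ z ∈ Finset.Icc x y, g z y = 0 := by
    intro z hz
    rw [Finset.mem_Icc] at hz
    simp [hgdef, hrdef, restrict, hz.1, hz.2, le_refl]
  have hgx : ∀ z ∈ Finset.Icc x y, g x z = 0 := by
    intro z hz
    rw [Finset.mem_Icc] at hz
    simp [hgdef, hrdef, restrict, hz.1, hz.2, le_refl]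
  have hA : conv (θ g) e x y = 0 := by
    simp only [conv, hedef]
    apply Finset.sum_eq_zero
    intro z hz
    rw [if_neg, mul_zero]
    rintro ⟨-, h2⟩
    exact hne h2.symm
  have hB : conv (θ e) g x y = 0 :=
    Finset.sum_eq_zero fun z hz => by rw [hgz z hz, mul_zero]
  have hC : conv g (θ e) x y = 0 :=
    Finset.sum_eq_zero fun z hz => by rw [hgx z hz, zero_mul]
  have hD : conv e (θ g) x y = θ g x y := by
    simp only [conv, hedef]
    rw [Finset.sum_eq_single x]
    · simp
    · intro z hz hne'
      rw [if_neg, zero_mul]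
      rintro ⟨-, rfl⟩
      exact hne' rfl
    · intro h
      exact absurd (Finset.mem_Icc.mpr ⟨le_refl x, hxy⟩) h
  rw [hA, hB, hC, hD] at key
  have hz0 : θ g x y = 0 := by linear_combination -key
  rw [hsplit, hz0, zero_add]
end
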